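/- Lipschitz saturation commutes with finite products: if g_i : A_i → B_i are R-algebra morphisms for i = 1,…,n and g = ∏ g_i : ∏ A_i → ∏ B_i, then (∏ A_i)*_{∏ B_i, R} = ∏ (A_i)*_{B_i, R}. -/
import Mathlib


open TensorProduct

/-- Integral closure of an ideal: `x` satisfies an equation of integral dependence over `I`. -/
def Ideal.intClosure {S : Type*} [CommRing S] (I : Ideal S) : Set S :=
  {x | ∃ n : ℕ, 0 < n ∧ ∃ a : ℕ → S, (∀ i ∈ Finset.Icc 1 n, a i ∈ I ^ i) ∧
      x ^ n + ∑ i ∈ Finset.Icc 1 n, a i * x ^ (n - i) = 0}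

variable (R A B : Type*) [CommRing R] [CommRing A] [CommRing B]
  [Algebra R A] [Algebra R B] [Algebra A B] [IsScalarTower R A B]

/-- The diagonal map `b ↦ b ⊗ 1 - 1 ⊗ b`. -/
noncomputable def lipDelta (b : B) : B ⊗[R] B := b ⊗ₜ[R] 1 - 1 ⊗ₜ[R] b

/-- The canonical morphism `B ⊗[R] B → B ⊗[A] B`. -/
noncomputable def lipPhi : B ⊗[R] B →ₐ[R] B ⊗[A] B :=
  Algebra.TensorProduct.lift
    ((Algebra.TensorProduct.includeLeft : B →ₐ[A] B ⊗[A] B).restrictScalars R)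
    ((Algebra.TensorProduct.includeRight : B →ₐ[A] B ⊗[A] B).restrictScalars R)
    (fun _ _ => Commute.all _ _)

/-- The relative Lipschitz saturation of `A` in `B` over `R`. -/
noncomputable def lipSat : Set B :=
  {x | lipDelta R B x ∈ (RingHom.ker (lipPhi R A B)).intClosure}

/- ### Auxiliary material -/

theorem lipPhi_tmul (b b' : B) : lipPhi R A B (b ⊗ₜ[R] b') = b ⊗ₜ[A] b' := by
  simp [lipPhi, Algebra.TensorProduct.lift_tmul]

/-- Padding an equation of integral dependence to a higher degree. -/
theorem Ideal.intClosure_pad {S : Type*} [CommRing S] {I : Ideal S} {x : S} {n N : ℕ}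
    (hn : 0 < n) (hnN : n ≤ N) (a : ℕ → S) (ha : ∀ i ∈ Finset.Icc 1 n, a i ∈ I ^ i)
    (heq : x ^ n + ∑ i ∈ Finset.Icc 1 n, a i * x ^ (n - i) = 0) :
    ∃ b : ℕ → S, (∀ i ∈ Finset.Icc 1 N, b i ∈ I ^ i) ∧
      x ^ N + ∑ i ∈ Finset.Icc 1 N, b i * x ^ (N - i) = 0 := by
  refine ⟨fun k => if k ≤ n then a k else 0, fun k hk => ?_, ?_⟩
  · rw [Finset.mem_Icc] at hk
    show (if k ≤ n then a k else 0) ∈ I ^ k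
    split
    · exact ha k (Finset.mem_Icc.mpr ⟨hk.1, ‹k ≤ n›⟩)
    · exact zero_mem _
  · have hsub : Finset.Icc 1 n ⊆ Finset.Icc 1 N := Finset.Icc_subset_Icc_right hnN
    have h1 : ∑ k ∈ Finset.Icc 1 N, (if k ≤ n then a k else 0) * x ^ (N - k)
        = ∑ k ∈ Finset.Icc 1 n, a k * x ^ (N - k) := by
      rw [← Finset.sum_subset hsub]
      · apply Finset.sum_congr rfl
        intro k hk
        rw [Finset.mem_Icc] at hk
        rw [if_pos hk.2]
      · intro k hk hk'
        rw [Finset.mem_Icc] at hk hk'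
        rw [if_neg (by omega), zero_mul]
    rw [h1]
    have h2 : x ^ N + ∑ k ∈ Finset.Icc 1 n, a k * x ^ (N - k)
        = x ^ (N - n) * (x ^ n + ∑ k ∈ Finset.Icc 1 n, a k * x ^ (n - k)) := by
      rw [mul_add, Finset.mul_sum]
      congr 1
      · rw [← pow_add]; congr 1; omega
      · apply Finset.sum_congr rfl
        intro k hk
        rw [Finset.mem_Icc] at hk
        rw [mul_comm (x ^ (N - n)), mul_assoc, ← pow_add]
        congr 2
        omega
    rw [h2, heq, mul_zero]

section PiAux

attribute [-instance] Pi.module' Pi.smul'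

variable (R1 : Type*) [CommRing R1] {m : ℕ} (A1 B1 : Fin m → Type*)
  [∀ i, CommRing (A1 i)] [∀ i, CommRing (B1 i)]
  [∀ i, Algebra R1 (A1 i)] [∀ i, Algebra R1 (B1 i)]
  [∀ i, Algebra (A1 i) (B1 i)] [∀ i, IsScalarTower R1 (A1 i) (B1 i)]
  [Algebra (∀ i, A1 i) (∀ i, B1 i)]

noncomputable def piSigma (i : Fin m) :
    (B1 i ⊗[R1] B1 i) →ₗ[R1] ((∀ j, B1 j) ⊗[R1] (∀ j, B1 j)) :=
  TensorProduct.map (LinearMap.single R1 B1 i) (LinearMap.single R1 B1 i)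

theorem piSigma_tmul (i : Fin m) (b b' : B1 i) :
    piSigma R1 B1 i (b ⊗ₜ[R1] b') = (Pi.single i b : ∀ j, B1 j) ⊗ₜ[R1] Pi.single i b' := rfl

noncomputable def piP (i : Fin m) :
    ((∀ j, B1 j) ⊗[R1] (∀ j, B1 j)) →ₐ[R1] (B1 i ⊗[R1] B1 i) :=
  Algebra.TensorProduct.map (Pi.evalAlgHom R1 B1 i) (Pi.evalAlgHom R1 B1 i)

theorem piP_tmul (i : Fin m) (b b' : ∀ j, B1 j) :
    piP R1 B1 i (b ⊗ₜ[R1] b') = b i ⊗ₜ[R1] b' i := rfl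

theorem piSigma_mul (i : Fin m) (s t : B1 i ⊗[R1] B1 i) :
    piSigma R1 B1 i (s * t) = piSigma R1 B1 i s * piSigma R1 B1 i t := by
  induction s using TensorProduct.induction_on with
  | zero => simp
  | add u v hu hv => rw [add_mul, map_add, map_add, hu, hv, add_mul]
  | tmul b b' =>
    induction t using TensorProduct.induction_on with
    | zero => simp
    | add u v hu hv => rw [mul_add, map_add, map_add, hu, hv, mul_add]
    | tmul c c' =>
      rw [Algebra.TensorProduct.tmul_mul_tmul, piSigma_tmul, piSigma_tmul, piSigma_tmul,
        Algebra.TensorProduct.tmul_mul_tmul, Pi.single_mul, Pi.single_mul]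

theorem piSigma_orth {i j : Fin m} (h : i ≠ j) (s : B1 i ⊗[R1] B1 i) (t : B1 j ⊗[R1] B1 j) :
    piSigma R1 B1 i s * piSigma R1 B1 j t = 0 := by
  have key : ∀ (b : B1 i) (c : B1 j), (Pi.single i b : ∀ k, B1 k) * Pi.single j c = 0 := by
    intro b c
    funext k
    rcases eq_or_ne k i with rfl | hk
    · simp [Pi.single_eq_of_ne h]
    · simp [Pi.single_eq_of_ne hk]
  induction s using TensorProduct.induction_on with
  | zero => simp
  | add u v hu hv => rw [map_add, add_mul, hu, hv, add_zero]
  | tmul b b' =>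
    induction t using TensorProduct.induction_on with
    | zero => simp
    | add u v hu hv => rw [map_add, mul_add, hu, hv, add_zero]
    | tmul c c' =>
      rw [piSigma_tmul, piSigma_tmul, Algebra.TensorProduct.tmul_mul_tmul, key, zero_tmul]

variable (hg : ∀ (a : ∀ i, A1 i) (i : Fin m),
    algebraMap (∀ i, A1 i) (∀ i, B1 i) a i = algebraMap (A1 i) (B1 i) (a i))

/-- The componentwise projection on tensor products over the base `∏ A`. -/
noncomputable def piQ (i : Fin m) :
    ((∀ j, B1 j) ⊗[∀ j, A1 j] (∀ j, B1 j)) →+ (B1 i ⊗[A1 i] B1 i) :=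
  TensorProduct.liftAddHom
    (AddMonoidHom.mk' (fun b => AddMonoidHom.mk' (fun b' => b i ⊗ₜ[A1 i] b' i)
        (fun u v => by simp only [Pi.add_apply, tmul_add]))
      (fun u v => by
        apply AddMonoidHom.ext
        intro b'
        simp only [AddMonoidHom.mk'_apply, AddMonoidHom.add_apply, Pi.add_apply, add_tmul]))
    (fun a b b' => by
      simp only [AddMonoidHom.mk'_apply]
      rw [Algebra.smul_def, Algebra.smul_def, Pi.mul_apply, Pi.mul_apply, hg,
        ← Algebra.smul_def, ← Algebra.smul_def]
      exact TensorProduct.smul_tmul _ _ _)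

include hg in
theorem piQ_tmul (i : Fin m) (b b' : ∀ j, B1 j) :
    piQ A1 B1 hg i (b ⊗ₜ[∀ j, A1 j] b') = b i ⊗ₜ[A1 i] b' i := by
  simp [piQ, TensorProduct.liftAddHom_tmul]

/-- Moving `algebraMap` across a tensor over `∏ A`. -/
theorem tmul_algebraMap_mul (x : ∀ j, A1 j) (u v : ∀ j, B1 j) :
    (algebraMap (∀ j, A1 j) (∀ j, B1 j) x * u) ⊗ₜ[∀ j, A1 j] v
      = u ⊗ₜ[∀ j, A1 j] (algebraMap (∀ j, A1 j) (∀ j, B1 j) x * v) := by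
  haveI : SMulCommClass (∀ j, A1 j) (∀ j, A1 j) (∀ j, B1 j) :=
    ⟨fun a b c => by
      rw [Algebra.smul_def, Algebra.smul_def, Algebra.smul_def, Algebra.smul_def]
      ring⟩
  have h1 : (algebraMap (∀ j, A1 j) (∀ j, B1 j) x) ⊗ₜ[∀ j, A1 j] (1 : ∀ j, B1 j)
      = (1 : ∀ j, B1 j) ⊗ₜ[∀ j, A1 j] (algebraMap (∀ j, A1 j) (∀ j, B1 j) x) := by
    have h2 : algebraMap (∀ j, A1 j) ((∀ j, B1 j) ⊗[∀ j, A1 j] (∀ j, B1 j)) x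
        = (algebraMap (∀ j, A1 j) (∀ j, B1 j) x) ⊗ₜ[∀ j, A1 j] (1 : ∀ j, B1 j) :=
      Algebra.TensorProduct.algebraMap_apply x
    have h3 : algebraMap (∀ j, A1 j) ((∀ j, B1 j) ⊗[∀ j, A1 j] (∀ j, B1 j)) x
        = (1 : ∀ j, B1 j) ⊗ₜ[∀ j, A1 j] (algebraMap (∀ j, A1 j) (∀ j, B1 j) x) :=
      Algebra.TensorProduct.algebraMap_apply' x
    rw [← h2, h3]
  calc (algebraMap (∀ j, A1 j) (∀ j, B1 j) x * u) ⊗ₜ[∀ j, A1 j] v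
      = ((algebraMap (∀ j, A1 j) (∀ j, B1 j) x) ⊗ₜ[∀ j, A1 j] (1 : ∀ j, B1 j)) * (u ⊗ₜ v) := by
        rw [Algebra.TensorProduct.tmul_mul_tmul, one_mul]
    _ = ((1 : ∀ j, B1 j) ⊗ₜ[∀ j, A1 j] (algebraMap (∀ j, A1 j) (∀ j, B1 j) x)) * (u ⊗ₜ v) := by
        rw [h1]
    _ = u ⊗ₜ[∀ j, A1 j] (algebraMap (∀ j, A1 j) (∀ j, B1 j) x * v) := by
        rw [Algebra.TensorProduct.tmul_mul_tmul, one_mul]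

include hg in
theorem pi_single_algebraMap (i : Fin m) (a : A1 i) :
    (Pi.single i (algebraMap (A1 i) (B1 i) a) : ∀ j, B1 j)
      = algebraMap (∀ j, A1 j) (∀ j, B1 j) (Pi.single i a) := by
  funext j
  rw [hg]
  rcases eq_or_ne j i with rfl | hj
  · rw [Pi.single_eq_same, Pi.single_eq_same]
  · rw [Pi.single_eq_of_ne hj, Pi.single_eq_of_ne hj, map_zero]

/-- The componentwise inclusion on tensor products over the base `∏ A`. -/
noncomputable def piS (i : Fin m) :
    (B1 i ⊗[A1 i] B1 i) →+ ((∀ j, B1 j) ⊗[∀ j, A1 j] (∀ j, B1 j)) :=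
  TensorProduct.liftAddHom
    (AddMonoidHom.mk' (fun b => AddMonoidHom.mk'
        (fun b' => (Pi.single i b : ∀ j, B1 j) ⊗ₜ[∀ j, A1 j] (Pi.single i b' : ∀ j, B1 j))
        (fun u v => by simp only [Pi.single_add, tmul_add]))
      (fun u v => by
        apply AddMonoidHom.ext
        intro b'
        simp only [AddMonoidHom.mk'_apply, AddMonoidHom.add_apply, Pi.single_add, add_tmul]))
    (fun a b b' => by
      simp only [AddMonoidHom.mk'_apply]
      rw [Algebra.smul_def, Algebra.smul_def, Pi.single_mul, Pi.single_mul,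
        pi_single_algebraMap A1 B1 hg, tmul_algebraMap_mul A1 B1])

include hg in
theorem piS_tmul (i : Fin m) (b b' : B1 i) :
    piS A1 B1 hg i (b ⊗ₜ[A1 i] b') =
      (Pi.single i b : ∀ j, B1 j) ⊗ₜ[∀ j, A1 j] (Pi.single i b' : ∀ j, B1 j) := by
  simp [piS, TensorProduct.liftAddHom_tmul]

variable [IsScalarTower R1 (∀ i, A1 i) (∀ i, B1 i)]

include hg in
theorem piQ_phi (i : Fin m) (t : (∀ j, B1 j) ⊗[R1] (∀ j, B1 j)) :
    lipPhi R1 (A1 i) (B1 i) (piP R1 B1 i t) =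
      piQ A1 B1 hg i (lipPhi R1 (∀ j, A1 j) (∀ j, B1 j) t) := by
  induction t using TensorProduct.induction_on with
  | zero => simp
  | add u v hu hv => rw [map_add, map_add, map_add, map_add, hu, hv]
  | tmul b b' => rw [piP_tmul, lipPhi_tmul, lipPhi_tmul, piQ_tmul]

include hg in
theorem piS_phi (i : Fin m) (t : B1 i ⊗[R1] B1 i) :
    lipPhi R1 (∀ j, A1 j) (∀ j, B1 j) (piSigma R1 B1 i t) =
      piS A1 B1 hg i (lipPhi R1 (A1 i) (B1 i) t) := by
  induction t using TensorProduct.induction_on with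
  | zero => simp
  | add u v hu hv => rw [map_add, map_add, map_add, map_add, hu, hv]
  | tmul b b' => rw [piSigma_tmul, lipPhi_tmul, lipPhi_tmul, piS_tmul]

include hg in
theorem piP_ker_pow (i : Fin m) (k : ℕ) {t : (∀ j, B1 j) ⊗[R1] (∀ j, B1 j)}
    (ht : t ∈ (RingHom.ker (lipPhi R1 (∀ j, A1 j) (∀ j, B1 j))) ^ k) :
    piP R1 B1 i t ∈ (RingHom.ker (lipPhi R1 (A1 i) (B1 i))) ^ k := by
  have hbase : Ideal.map (piP R1 B1 i).toRingHom (RingHom.ker (lipPhi R1 (∀ j, A1 j) (∀ j, B1 j)))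
      ≤ RingHom.ker (lipPhi R1 (A1 i) (B1 i)) := by
    rw [Ideal.map_le_iff_le_comap]
    intro s hs
    rw [RingHom.mem_ker] at hs
    simp only [Ideal.mem_comap, RingHom.mem_ker, AlgHom.toRingHom_eq_coe, RingHom.coe_coe]
    rw [piQ_phi R1 A1 B1 hg, hs, map_zero]
  have h2 : Ideal.map (piP R1 B1 i).toRingHom
      ((RingHom.ker (lipPhi R1 (∀ j, A1 j) (∀ j, B1 j))) ^ k)
      ≤ (RingHom.ker (lipPhi R1 (A1 i) (B1 i))) ^ k := by
    rw [Ideal.map_pow]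
    exact Ideal.pow_right_mono hbase k
  exact h2 (Ideal.mem_map_of_mem _ ht)

include hg in
theorem piSigma_ker (i : Fin m) {t : B1 i ⊗[R1] B1 i}
    (ht : t ∈ RingHom.ker (lipPhi R1 (A1 i) (B1 i))) :
    piSigma R1 B1 i t ∈ RingHom.ker (lipPhi R1 (∀ j, A1 j) (∀ j, B1 j)) := by
  rw [RingHom.mem_ker] at ht ⊢
  rw [piS_phi R1 A1 B1 hg, ht, map_zero]

include hg in
theorem piSigma_ker_pow (i : Fin m) (k : ℕ) {t : B1 i ⊗[R1] B1 i}
    (ht : t ∈ (RingHom.ker (lipPhi R1 (A1 i) (B1 i))) ^ k) :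
    piSigma R1 B1 i t ∈ (RingHom.ker (lipPhi R1 (∀ j, A1 j) (∀ j, B1 j))) ^ k := by
  induction k generalizing t with
  | zero => simp
  | succ k ih =>
    rw [pow_succ] at ht
    refine Submodule.mul_induction_on ht (fun a ha b hb => ?_) (fun s t hs ht => ?_)
    · rw [piSigma_mul, pow_succ]
      exact Ideal.mul_mem_mul (ih ha) (piSigma_ker R1 A1 B1 hg i hb)
    · rw [map_add]
      exact add_mem hs ht

theorem piSigma_one (i : Fin m) :
    piSigma R1 B1 i 1 = (Pi.single i 1 : ∀ j, B1 j) ⊗ₜ[R1] (Pi.single i 1 : ∀ j, B1 j) := by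
  rw [Algebra.TensorProduct.one_def, piSigma_tmul]

include hg in
theorem phi_E :
    lipPhi R1 (∀ j, A1 j) (∀ j, B1 j) (∑ i, piSigma R1 B1 i 1) = 1 := by
  rw [map_sum]
  have h1 : ∀ i : Fin m, lipPhi R1 (∀ j, A1 j) (∀ j, B1 j) (piSigma R1 B1 i 1)
      = (1 : ∀ j, B1 j) ⊗ₜ[∀ j, A1 j]
        (algebraMap (∀ j, A1 j) (∀ j, B1 j) (Pi.single i 1)) := by
    intro i
    rw [piSigma_one, lipPhi_tmul]
    have e1 : (Pi.single i 1 : ∀ j, B1 j) = algebraMap (∀ j, A1 j) (∀ j, B1 j) (Pi.single i 1) := by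
      rw [← pi_single_algebraMap A1 B1 hg i 1, map_one]
    rw [e1]
    calc (algebraMap (∀ j, A1 j) (∀ j, B1 j) (Pi.single i 1)) ⊗ₜ[∀ j, A1 j]
          (algebraMap (∀ j, A1 j) (∀ j, B1 j) (Pi.single i 1))
        = (algebraMap (∀ j, A1 j) (∀ j, B1 j) (Pi.single i 1) * 1) ⊗ₜ[∀ j, A1 j]
          (algebraMap (∀ j, A1 j) (∀ j, B1 j) (Pi.single i 1)) := by rw [mul_one]
      _ = (1 : ∀ j, B1 j) ⊗ₜ[∀ j, A1 j]
          (algebraMap (∀ j, A1 j) (∀ j, B1 j) (Pi.single i 1) *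
            algebraMap (∀ j, A1 j) (∀ j, B1 j) (Pi.single i 1)) := tmul_algebraMap_mul A1 B1 _ _ _
      _ = (1 : ∀ j, B1 j) ⊗ₜ[∀ j, A1 j]
          (algebraMap (∀ j, A1 j) (∀ j, B1 j) (Pi.single i 1)) := by
          rw [← map_mul]
          congr 1
          congr 1
          rw [← Pi.single_mul, one_mul]
  simp only [h1]
  rw [← TensorProduct.tmul_sum, ← map_sum]
  have h2 : (∑ i : Fin m, (Pi.single i 1 : ∀ j, A1 j)) = 1 := by
    have := Finset.univ_sum_single (1 : ∀ j, A1 j)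
    simpa using this
  rw [h2, map_one, ← Algebra.TensorProduct.one_def]

theorem pi_mul_single (i : Fin m) (x : ∀ j, B1 j) (b : B1 i) :
    x * Pi.single i b = Pi.single i (x i * b) := by
  funext j
  rcases eq_or_ne j i with rfl | hj
  · rw [Pi.mul_apply, Pi.single_eq_same, Pi.single_eq_same]
  · rw [Pi.mul_apply, Pi.single_eq_of_ne hj, Pi.single_eq_of_ne hj, mul_zero]

theorem lipDelta_mul_piSigma (x : ∀ j, B1 j) (i : Fin m) (t : B1 i ⊗[R1] B1 i) :
    lipDelta R1 (∀ j, B1 j) x * piSigma R1 B1 i t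
      = piSigma R1 B1 i (lipDelta R1 (B1 i) (x i) * t) := by
  have h1 : lipDelta R1 (∀ j, B1 j) x * piSigma R1 B1 i 1
      = piSigma R1 B1 i (lipDelta R1 (B1 i) (x i)) := by
    rw [piSigma_one]
    unfold lipDelta
    rw [sub_mul, Algebra.TensorProduct.tmul_mul_tmul, Algebra.TensorProduct.tmul_mul_tmul,
      map_sub, piSigma_tmul, piSigma_tmul]
    simp [pi_mul_single]
  calc lipDelta R1 (∀ j, B1 j) x * piSigma R1 B1 i t
      = lipDelta R1 (∀ j, B1 j) x * (piSigma R1 B1 i 1 * piSigma R1 B1 i t) := by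
        rw [← piSigma_mul, one_mul]
    _ = (lipDelta R1 (∀ j, B1 j) x * piSigma R1 B1 i 1) * piSigma R1 B1 i t := by ring
    _ = piSigma R1 B1 i (lipDelta R1 (B1 i) (x i)) * piSigma R1 B1 i t := by rw [h1]
    _ = piSigma R1 B1 i (lipDelta R1 (B1 i) (x i) * t) := by rw [← piSigma_mul]

theorem lipDelta_pow_piSigma (x : ∀ j, B1 j) (i : Fin m) (k : ℕ) (t : B1 i ⊗[R1] B1 i) :
    (lipDelta R1 (∀ j, B1 j) x) ^ k * piSigma R1 B1 i t
      = piSigma R1 B1 i ((lipDelta R1 (B1 i) (x i)) ^ k * t) := by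
  induction k generalizing t with
  | zero => simp
  | succ k ih =>
    rw [pow_succ, mul_assoc, lipDelta_mul_piSigma, ih, pow_succ, mul_assoc]

theorem piP_lipDelta (i : Fin m) (x : ∀ j, B1 j) :
    piP R1 B1 i (lipDelta R1 (∀ j, B1 j) x) = lipDelta R1 (B1 i) (x i) := by
  unfold lipDelta
  rw [map_sub, piP_tmul, piP_tmul, Pi.one_apply]

end PiAux

set_option maxHeartbeats 1000000

/-- Lipschitz saturation commutes with finite products: for `R`-algebra morphisms
`gᵢ : Aᵢ → Bᵢ` and the product morphism `g = ∏ gᵢ : ∏ Aᵢ → ∏ Bᵢ` (acting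
componentwise), one has `(∏ Aᵢ)*_{∏ Bᵢ, R} = ∏ (Aᵢ)*_{Bᵢ, R}`. -/
theorem lipSat_pi (R' : Type*) [CommRing R'] {n : ℕ} (A' B' : Fin n → Type*)
    [∀ i, CommRing (A' i)] [∀ i, CommRing (B' i)]
    [∀ i, Algebra R' (A' i)] [∀ i, Algebra R' (B' i)]
    [∀ i, Algebra (A' i) (B' i)] [∀ i, IsScalarTower R' (A' i) (B' i)]
    [Algebra (∀ i, A' i) (∀ i, B' i)]
    (hg : ∀ (a : ∀ i, A' i) (i : Fin n),
      algebraMap (∀ i, A' i) (∀ i, B' i) a i = algebraMap (A' i) (B' i) (a i))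
    (htower : ∀ r : R', algebraMap R' (∀ i, B' i) r =
      algebraMap (∀ i, A' i) (∀ i, B' i) (algebraMap R' (∀ i, A' i) r)) :
    @lipSat R' (∀ i, A' i) (∀ i, B' i) _ _ _ _ _ _
        (IsScalarTower.of_algebraMap_eq htower) =
      {x | ∀ i, x i ∈ lipSat R' (A' i) (B' i)} := by
  classical
  haveI := IsScalarTower.of_algebraMap_eq htower
  ext x
  simp only [lipSat, Set.mem_setOf_eq, Ideal.intClosure]
  constructor
  · rintro ⟨N, hN, a, ha, heq⟩ i
    refine ⟨N, hN, fun k => piP R' B' i (a k),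
      fun k hk => piP_ker_pow R' A' B' hg i k (ha k hk), ?_⟩
    have h0 := congrArg (piP R' B' i) heq
    simp only [map_add, map_pow, map_sum, map_mul, map_zero, piP_lipDelta] at h0
    simpa using h0
  · intro hx
    choose nn hnn aa haa heqq using hx
    set N := Finset.univ.sup nn + 1 with hNdef
    have hN1 : 0 < N := Nat.succ_pos _
    have hpad : ∀ i, ∃ b : ℕ → (B' i ⊗[R'] B' i),
        (∀ k ∈ Finset.Icc 1 N, b k ∈ (RingHom.ker (lipPhi R' (A' i) (B' i))) ^ k) ∧
        (lipDelta R' (B' i) (x i)) ^ N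
          + ∑ k ∈ Finset.Icc 1 N, b k * (lipDelta R' (B' i) (x i)) ^ (N - k) = 0 := by
      intro i
      exact Ideal.intClosure_pad (hnn i)
        (le_trans (Finset.le_sup (Finset.mem_univ i)) (Nat.le_succ _)) (aa i) (haa i) (heqq i)
    choose b hb hbeq using hpad
    refine ⟨N, hN1,
      fun k => (∑ i, piSigma R' B' i (b i k)) +
        (if k = 1 then ((∑ i, piSigma R' B' i 1) - 1) * lipDelta R' (∀ j, B' j) x else 0),
      ?_, ?_⟩
    · intro k hk
      apply Ideal.add_mem
      · exact Ideal.sum_mem _ fun i _ => piSigma_ker_pow R' A' B' hg i k (hb i k hk)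
      · split_ifs with h
        · subst h
          rw [pow_one]
          apply Ideal.mul_mem_right
          rw [RingHom.mem_ker, map_sub, phi_E R' A' B' hg, map_one, sub_self]
        · exact zero_mem _
    · set z := lipDelta R' (∀ j, B' j) x with hz
      set E := ∑ i, piSigma R' B' i 1 with hE
      have hIcc1 : (1 : ℕ) ∈ Finset.Icc 1 N := Finset.mem_Icc.mpr ⟨le_refl 1, hN1⟩
      have hzz : z * z ^ (N - 1) = z ^ N := by
        rw [← pow_succ', Nat.sub_add_cancel hN1]
      have hzE : z ^ N * E = ∑ i, piSigma R' B' i ((lipDelta R' (B' i) (x i)) ^ N) := by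
        rw [hE, Finset.mul_sum]
        exact Finset.sum_congr rfl fun i _ => by rw [hz, lipDelta_pow_piSigma, mul_one]
      have hneg : ∀ i : Fin n, ∑ k ∈ Finset.Icc 1 N,
          (lipDelta R' (B' i) (x i)) ^ (N - k) * b i k = -((lipDelta R' (B' i) (x i)) ^ N) := by
        intro i
        have h' : ∑ k ∈ Finset.Icc 1 N, (lipDelta R' (B' i) (x i)) ^ (N - k) * b i k
            = ∑ k ∈ Finset.Icc 1 N, b i k * (lipDelta R' (B' i) (x i)) ^ (N - k) :=
          Finset.sum_congr rfl fun k _ => mul_comm _ _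
        rw [h']
        exact eq_neg_of_add_eq_zero_right (hbeq i)
      have hsum : ∑ k ∈ Finset.Icc 1 N,
          ((∑ i, piSigma R' B' i (b i k)) + (if k = 1 then (E - 1) * z else 0)) * z ^ (N - k)
          = -(z ^ N * E) + (E - 1) * z ^ N := by
        simp only [add_mul, ite_mul, zero_mul]
        rw [Finset.sum_add_distrib]
        congr 1
        · simp only [Finset.sum_mul]
          rw [Finset.sum_comm]
          have key : ∀ i : Fin n, ∑ k ∈ Finset.Icc 1 N, piSigma R' B' i (b i k) * z ^ (N - k)
              = piSigma R' B' i (-(lipDelta R' (B' i) (x i) ^ N)) := by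
            intro i
            have e1 : ∀ k, piSigma R' B' i (b i k) * z ^ (N - k)
                = piSigma R' B' i ((lipDelta R' (B' i) (x i)) ^ (N - k) * b i k) := by
              intro k
              rw [mul_comm, hz, lipDelta_pow_piSigma]
            simp only [e1]
            rw [← map_sum, hneg i]
          simp only [key]
          simp only [map_neg]
          rw [Finset.sum_neg_distrib, hzE]
        · have hzero : ∀ k ∈ Finset.Icc 1 N, k ≠ 1 →
              (if k = 1 then (E - 1) * z * z ^ (N - k) else 0) = 0 := by
            intro k _ hk1
            rw [if_neg hk1]
          rw [Finset.sum_eq_single_of_mem 1 hIcc1 hzero, if_pos rfl, mul_assoc, hzz]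
      show z ^ N + ∑ k ∈ Finset.Icc 1 N,
          ((∑ i, piSigma R' B' i (b i k)) + (if k = 1 then (E - 1) * z else 0)) * z ^ (N - k) = 0
      rw [hsum]
      ring
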